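/- arXiv:1501.04362 — 3 statements merged into one kernel-verified Lean document; each statement's English description precedes it below -/
import Mathlib

section
/- Let U be a metric space, V a separable metric space, and F : U × V → ℝ lower semicontinuous and bounded. Then for every ε > 0 there exists a Borel-measurable map φ_ε : U → V such that F(u, φ_ε(u)) ≥ sup_{v∈V} F(u,v) − ε for all u ∈ U. -/
theorem stmt_5 {U V : Type*} [MetricSpace U] [MetricSpace V]
    [TopologicalSpace.SeparableSpace V] [Nonempty V]
    [MeasurableSpace U] [BorelSpace U] [MeasurableSpace V] [BorelSpace V]
    (F : U × V → ℝ) (hF : LowerSemicontinuous F) (C : ℝ)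
    (hbdd : ∀ p, |F p| ≤ C) (ε : ℝ) (hε : 0 < ε) :
    ∃ φ : U → V, Measurable φ ∧ ∀ u, F (u, φ u) ≥ (⨆ v, F (u, v)) - ε := by
  classical
  obtain ⟨v, hv⟩ := TopologicalSpace.exists_dense_seq V
  set g : ℕ → U → ℝ := fun n u => F (u, v n) with hg
  have hgc : ∀ n, Measurable (g n) := by
    intro n
    have : LowerSemicontinuous (fun u : U => F (u, v n)) :=
      hF.comp (continuous_id.prodMk continuous_const)
    exact this.measurable
  have hbddA : ∀ u, BddAbove (Set.range fun n => g n u) := by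
    intro u
    exact ⟨C, by rintro _ ⟨n, rfl⟩; exact (abs_le.mp (hbdd _)).2⟩
  set S : U → ℝ := fun u => ⨆ n, g n u with hS
  have hSm : Measurable S := Measurable.iSup hgc
  -- sup over V ≤ sup over dense sequence
  have key : ∀ u, (⨆ w, F (u, w)) ≤ S u := by
    intro u
    apply ciSup_le
    intro w
    by_contra h
    push_neg at h
    have hev : ∀ᶠ p in nhds (u, w), S u < F p := hF (u, w) (S u) h
    rw [nhds_prod_eq] at hev
    obtain ⟨s, hs, t, ht, H⟩ := Filter.mem_prod_iff.mp hev
    obtain ⟨n, hn⟩ : ∃ n, v n ∈ interior t := by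
      have : (interior t).Nonempty := ⟨w, mem_interior_iff_mem_nhds.mpr ht⟩
      exact hv.exists_mem_open isOpen_interior this
    have h1 : S u < F (u, v n) := H ⟨mem_of_mem_nhds hs, interior_subset hn⟩
    have h2 : F (u, v n) ≤ S u := le_ciSup (hbddA u) n
    linarith
  have hex : ∀ u, ∃ n, S u - ε < g n u := by
    intro u
    exact exists_lt_of_lt_ciSup (by linarith [hε] : S u - ε < S u)
  refine ⟨fun u => v (Nat.find (hex u)), ?_, ?_⟩
  · have : Measurable fun u => (fun n (_ : U) => v n) (Nat.find (hex u)) u := by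
      apply Measurable.find (fun n => measurable_const)
      · intro n
        exact measurableSet_lt (hSm.sub measurable_const) (hgc n)
    exact this
  · intro u
    have h1 := Nat.find_spec (hex u)
    have h2 := key u
    simp only [ge_iff_le]
    linarith
end

section
/- Let U be a metric space, V a compact metric space, and F : U × V → ℝ upper semicontinuous and bounded. Then F*(u) := sup_{v∈V} F(u,v) is upper semicontinuous and bounded on U, and there exists a Borel-measurable map φ : U → V with F(u, φ(u)) = F*(u) for all u ∈ U. -/
open Set Metric Filter Topology

section BSaux

set_option linter.unusedSectionVars false

-- USC extreme value theorem
lemma BS_usc_max {V : Type*} [TopologicalSpace V] {g : V → ℝ} {K : Set V}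
    (hg : UpperSemicontinuous g) (hK : IsCompact K) (hne : K.Nonempty) :
    ∃ v ∈ K, ∀ w ∈ K, g w ≤ g v := by
  by_contra h
  push_neg at h
  have cover : K ⊆ ⋃ v ∈ K, g ⁻¹' Iio (g v) := by
    intro w hw
    obtain ⟨v, hv, hlt⟩ := h w hw
    exact mem_biUnion hv hlt
  obtain ⟨t, htK, htfin, hcov⟩ := hK.elim_finite_subcover_image
    (fun v _ => hg.isOpen_preimage (g v)) cover
  have htne : t.Nonempty := by
    rcases hne with ⟨w, hw⟩
    rcases mem_iUnion₂.1 (hcov hw) with ⟨v, hv, _⟩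
    exact ⟨v, hv⟩
  obtain ⟨v₀, hv₀t, hmax⟩ := Set.Finite.exists_maximalFor g t htfin htne
  have hv₀K : v₀ ∈ K := htK hv₀t
  rcases mem_iUnion₂.1 (hcov hv₀K) with ⟨v, hvt, hlt⟩
  exact absurd (hmax hvt (le_of_lt hlt)) (not_le.2 hlt)

variable {U V : Type*} [MetricSpace U] [MetricSpace V] [CompactSpace V]

noncomputable def BSgsup (F : U × V → ℝ) (u : U) (K : Set V) : ℝ :=
  sSup ((fun v => F (u, v)) '' K)

lemma BS_sec_usc {F : U × V → ℝ} (hF : UpperSemicontinuous F) (u : U) :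
    UpperSemicontinuous (fun v => F (u, v)) :=
  hF.comp (Continuous.prodMk_right u)

lemma BS_gsup_bddAbove (F : U × V → ℝ) {C : ℝ} (hbdd : ∀ p, |F p| ≤ C) (u : U) (K : Set V) :
    BddAbove ((fun v => F (u, v)) '' K) := by
  refine ⟨C, ?_⟩
  rintro x ⟨v, -, rfl⟩
  exact (abs_le.1 (hbdd _)).2

lemma BS_attain {F : U × V → ℝ} (hF : UpperSemicontinuous F) (u : U) {K : Set V}
    (hK : IsCompact K) (hne : K.Nonempty) :
    ∃ v ∈ K, F (u, v) = BSgsup F u K ∧ ∀ w ∈ K, F (u, w) ≤ F (u, v) := by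
  obtain ⟨v, hv, hmax⟩ := BS_usc_max (BS_sec_usc hF u) hK hne
  refine ⟨v, hv, ?_, hmax⟩
  have : IsGreatest ((fun v => F (u, v)) '' K) (F (u, v)) :=
    ⟨mem_image_of_mem _ hv, by rintro x ⟨w, hw, rfl⟩; exact hmax w hw⟩
  exact (this.csSup_eq).symm

lemma BS_le_gsup {F : U × V → ℝ} {C : ℝ} (hbdd : ∀ p, |F p| ≤ C) (u : U) {K : Set V}
    {v : V} (hv : v ∈ K) : F (u, v) ≤ BSgsup F u K :=
  le_csSup (BS_gsup_bddAbove F hbdd u K) (mem_image_of_mem _ hv)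

lemma BS_usc_gsup {F : U × V → ℝ} (hF : UpperSemicontinuous F) {C : ℝ}
    (hbdd : ∀ p, |F p| ≤ C) {K : Set V} (hK : IsCompact K) (hne : K.Nonempty) :
    UpperSemicontinuous (fun u => BSgsup F u K) := by
  intro u c hc
  have key : ∀ v, v ∈ K → ∃ A ∈ 𝓝 u, ∃ B ∈ 𝓝 v, ∀ p ∈ A ×ˢ B, F p < c := by
    intro v hv
    have h1 : F (u, v) < c := lt_of_le_of_lt (BS_le_gsup hbdd u hv) hc
    have h2 : ∀ᶠ p in 𝓝 (u, v), F p < c := hF (u, v) c h1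
    rcases mem_nhds_prod_iff.1 h2 with ⟨A, hA, B, hB, hAB⟩
    exact ⟨A, hA, B, hB, fun p hp => hAB hp⟩
  choose! A hA B hB hAB using key
  obtain ⟨t, hcov⟩ := hK.elim_nhds_subcover' (fun v hv => B v) (fun v hv => hB v hv)
  have hAmem : (⋂ v ∈ t, A v) ∈ 𝓝 u :=
    (Filter.biInter_finset_mem t).2 fun v hv => hA v v.2
  filter_upwards [hAmem] with u' hu'
  obtain ⟨m, hm, hmeq, -⟩ := BS_attain hF u' hK hne
  rw [← hmeq]
  rcases mem_iUnion₂.1 (hcov hm) with ⟨v, hvt, hmB⟩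
  exact hAB v v.2 _ ⟨(mem_iInter₂.1 hu') v hvt, hmB⟩

def BSball (z : ℕ → V) (n i : ℕ) : Set V := closedBall (z i) ((1/2 : ℝ)^n)

noncomputable def BSpick (F : U × V → ℝ) (z : ℕ → V) (u : U) (n : ℕ) (K : Set V) : ℕ :=
  sInf {i | (K ∩ BSball z n i).Nonempty ∧ BSgsup F u (K ∩ BSball z n i) = BSgsup F u K}

noncomputable def BSchain (F : U × V → ℝ) (z : ℕ → V) (u : U) : ℕ → Set V
  | 0 => univ
  | n+1 => BSchain F z u n ∩ BSball z n (BSpick F z u n (BSchain F z u n))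

def BSKc (z : ℕ → V) (σ : ℕ → ℕ) : ℕ → Set V
  | 0 => univ
  | n+1 => BSKc z σ n ∩ BSball z n (σ n)

noncomputable def BSidx (F : U × V → ℝ) (z : ℕ → V) (u : U) (n : ℕ) : ℕ :=
  BSpick F z u n (BSchain F z u n)

lemma BSchain_eq (F : U × V → ℝ) (z : ℕ → V) (u : U) :
    ∀ n, BSchain F z u n = BSKc z (BSidx F z u) n
  | 0 => rfl
  | n+1 => by simp only [BSchain, BSKc, BSidx, BSchain_eq F z u n]

lemma BSKc_congr (z : ℕ → V) {σ τ : ℕ → ℕ} :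
    ∀ n, (∀ m < n, σ m = τ m) → BSKc z σ n = BSKc z τ n
  | 0, _ => rfl
  | n+1, h => by
      rw [BSKc, BSKc, BSKc_congr z n (fun m hm => h m (hm.trans (Nat.lt_succ_self n))),
        h n (Nat.lt_succ_self n)]

lemma BSKc_isCompact (z : ℕ → V) (σ : ℕ → ℕ) : ∀ n, IsCompact (BSKc z σ n)
  | 0 => isCompact_univ
  | n+1 => (BSKc_isCompact z σ n).inter_right isClosed_closedBall

lemma BSKc_isClosed (z : ℕ → V) (σ : ℕ → ℕ) : ∀ n, IsClosed (BSKc z σ n)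
  | 0 => isClosed_univ
  | n+1 => (BSKc_isClosed z σ n).inter isClosed_closedBall

lemma BS_mem_ball_of_dense {z : ℕ → V} (hz : DenseRange z) (v : V) (n : ℕ) :
    ∃ i, v ∈ BSball z n i := by
  obtain ⟨i, hi⟩ := (Metric.denseRange_iff.1 hz) v ((1/2 : ℝ)^n) (by positivity)
  exact ⟨i, le_of_lt hi⟩

lemma BSpickSet_nonempty {F : U × V → ℝ} (hF : UpperSemicontinuous F) {z : ℕ → V}
    (hz : DenseRange z) (u : U) (n : ℕ) {K : Set V} (hK : IsCompact K) (hne : K.Nonempty) :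
    {i | (K ∩ BSball z n i).Nonempty ∧
      BSgsup F u (K ∩ BSball z n i) = BSgsup F u K}.Nonempty := by
  obtain ⟨v₀, hv₀, heq, hmax⟩ := BS_attain hF u hK hne
  obtain ⟨i, hi⟩ := BS_mem_ball_of_dense hz v₀ n
  refine ⟨i, ⟨v₀, hv₀, hi⟩, ?_⟩
  have hg : IsGreatest ((fun v => F (u, v)) '' (K ∩ BSball z n i)) (F (u, v₀)) :=
    ⟨mem_image_of_mem _ ⟨hv₀, hi⟩, by rintro x ⟨w, hw, rfl⟩; exact hmax w hw.1⟩
  rw [BSgsup, hg.csSup_eq, heq]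

lemma BSpick_mem {F : U × V → ℝ} (hF : UpperSemicontinuous F) {z : ℕ → V}
    (hz : DenseRange z) (u : U) (n : ℕ) {K : Set V} (hK : IsCompact K) (hne : K.Nonempty) :
    (K ∩ BSball z n (BSpick F z u n K)).Nonempty ∧
      BSgsup F u (K ∩ BSball z n (BSpick F z u n K)) = BSgsup F u K :=
  Nat.sInf_mem (BSpickSet_nonempty hF hz u n hK hne)

variable [MeasurableSpace U] [BorelSpace U]

lemma BS_measurable_sInf {S : U → Set ℕ}
    (hS : ∀ i, MeasurableSet {u | i ∈ S u}) : Measurable fun u => sInf (S u) := by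
  apply measurable_to_countable'
  intro j
  have : (fun u => sInf (S u)) ⁻¹' {j} =
      ({u | j ∈ S u} ∩ ⋂ k, ⋂ _ : k < j, {u | k ∈ S u}ᶜ) ∪
      ((⋂ k, {u | k ∈ S u}ᶜ) ∩ {u | j = 0}) := by
    ext u
    simp only [mem_preimage, mem_singleton_iff, mem_union, mem_inter_iff, mem_iInter,
      mem_compl_iff, mem_setOf_eq]
    constructor
    · rintro rfl
      rcases eq_empty_or_nonempty (S u) with he | hne
      · right
        refine ⟨fun k hk => ?_, by simp [he, Nat.sInf_empty]⟩
        rw [he] at hk; exact hk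
      · left
        exact ⟨Nat.sInf_mem hne, fun k hk hkS => Nat.notMem_of_lt_sInf hk hkS⟩
    · rintro (⟨hj, hbelow⟩ | ⟨hall, hj0⟩)
      · refine le_antisymm (Nat.sInf_le hj) (le_of_not_gt fun hlt => ?_)
        exact hbelow _ hlt (Nat.sInf_mem ⟨j, hj⟩)
      · have : S u = ∅ := eq_empty_iff_forall_notMem.2 hall
        rw [this, Nat.sInf_empty, hj0]
  rw [this]
  refine MeasurableSet.union ((hS j).inter (MeasurableSet.iInter fun k =>
    MeasurableSet.iInter fun _ => (hS k).compl)) ?_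
  refine (MeasurableSet.iInter fun k => (hS k).compl).inter ?_
  by_cases h : j = 0 <;> simp [h]

lemma BS_meas_gsup {F : U × V → ℝ} (hF : UpperSemicontinuous F) {C : ℝ}
    (hbdd : ∀ p, |F p| ≤ C) {K : Set V} (hK : IsCompact K) (hne : K.Nonempty) :
    Measurable (fun u => BSgsup F u K) :=
  (BS_usc_gsup hF hbdd hK hne).measurable

lemma BS_meas_pick {F : U × V → ℝ} (hF : UpperSemicontinuous F) {C : ℝ}
    (hbdd : ∀ p, |F p| ≤ C) (z : ℕ → V) (n : ℕ) {K : Set V} (hK : IsCompact K) :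
    Measurable fun u => BSpick F z u n K := by
  apply BS_measurable_sInf
  intro i
  by_cases hne : (K ∩ BSball z n i).Nonempty
  · have : {u : U | i ∈ {i | (K ∩ BSball z n i).Nonempty ∧
        BSgsup F u (K ∩ BSball z n i) = BSgsup F u K}}
        = {u | BSgsup F u (K ∩ BSball z n i) = BSgsup F u K} := by
      ext u; simp [hne]
    rw [this]
    exact measurableSet_eq_fun (BS_meas_gsup hF hbdd (hK.inter_right isClosed_closedBall) hne)
      (BS_meas_gsup hF hbdd hK (hne.mono inter_subset_left))
  · have : {u : U | i ∈ {i | (K ∩ BSball z n i).Nonempty ∧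
        BSgsup F u (K ∩ BSball z n i) = BSgsup F u K}} = (∅ : Set U) := by
      ext u; simp [hne]
    rw [this]; exact MeasurableSet.empty

lemma BS_meas_idx {F : U × V → ℝ} (hF : UpperSemicontinuous F) {C : ℝ}
    (hbdd : ∀ p, |F p| ≤ C) (z : ℕ → V) :
    ∀ n, Measurable fun u => BSidx F z u n := by
  intro n
  induction n using Nat.strong_induction_on with
  | _ n IH =>
  have hrw : (fun u => BSidx F z u n) = fun u => BSpick F z u n (BSKc z (BSidx F z u) n) := by
    funext u; rw [BSidx, BSchain_eq]
  rw [hrw]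
  apply measurable_to_countable'
  intro j
  have key : (fun u => BSpick F z u n (BSKc z (BSidx F z u) n)) ⁻¹' {j} =
      ⋃ σ : Fin n → ℕ, ((⋂ m : Fin n, {u | BSidx F z u m = σ m}) ∩
        {u | BSpick F z u n (BSKc z (fun m => if h : m < n then σ ⟨m, h⟩ else 0) n) = j}) := by
    ext u
    simp only [mem_preimage, mem_singleton_iff, mem_iUnion, mem_inter_iff, mem_iInter,
      mem_setOf_eq]
    constructor
    · intro h
      refine ⟨fun m => BSidx F z u m, fun m => rfl, ?_⟩
      have : BSKc z (fun m => if h : m < n then BSidx F z u m else 0) n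
          = BSKc z (BSidx F z u) n :=
        BSKc_congr z n (fun m hm => by rw [dif_pos hm])
      rw [this]; exact h
    · rintro ⟨σ, hσ, h⟩
      have : BSKc z (BSidx F z u) n
          = BSKc z (fun m => if h : m < n then σ ⟨m, h⟩ else 0) n :=
        BSKc_congr z n (fun m hm => by rw [dif_pos hm]; exact hσ ⟨m, hm⟩)
      rw [this]; exact h
  rw [key]
  refine MeasurableSet.iUnion fun σ => MeasurableSet.inter
    (MeasurableSet.iInter fun m => (IH m m.2) (measurableSet_singleton (σ m)))
    ((BS_meas_pick hF hbdd z n (BSKc_isCompact z _ n)) (measurableSet_singleton j))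

end BSaux

theorem stmt_6 {U V : Type*} [MetricSpace U] [MetricSpace V] [CompactSpace V] [Nonempty V]
    [MeasurableSpace U] [BorelSpace U] [MeasurableSpace V] [BorelSpace V]
    (F : U × V → ℝ) (hF : UpperSemicontinuous F) (C : ℝ) (hbdd : ∀ p, |F p| ≤ C) :
    (UpperSemicontinuous fun u => ⨆ v, F (u, v)) ∧
    (∀ u, |⨆ v, F (u, v)| ≤ C) ∧
    ∃ φ : U → V, Measurable φ ∧ ∀ u, F (u, φ u) = ⨆ v, F (u, v) := by
  obtain ⟨z, hz⟩ := TopologicalSpace.exists_dense_seq V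
  have hsup_eq : ∀ u : U, (⨆ v, F (u, v)) = BSgsup F u univ := by
    intro u; rw [BSgsup, image_univ]; rfl
  have hfun_eq : (fun u => ⨆ v, F (u, v)) = fun u => BSgsup F u univ := funext hsup_eq
  refine ⟨?_, ?_, ?_⟩
  · rw [hfun_eq]
    exact BS_usc_gsup hF hbdd isCompact_univ univ_nonempty
  · intro u
    rw [hsup_eq, abs_le]
    constructor
    · have v₀ := Classical.arbitrary V
      calc -C ≤ F (u, v₀) := (abs_le.1 (hbdd _)).1
        _ ≤ BSgsup F u univ := BS_le_gsup hbdd u (mem_univ v₀)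
    · refine csSup_le (univ_nonempty.image _) ?_
      rintro x ⟨v, -, rfl⟩
      exact (abs_le.1 (hbdd _)).2
  · -- the selection
    have hKcomp : ∀ (u : U) n, IsCompact (BSchain F z u n) := fun u n =>
      (BSchain_eq F z u n) ▸ BSKc_isCompact z _ n
    have hKclosed : ∀ (u : U) n, IsClosed (BSchain F z u n) := fun u n =>
      (BSchain_eq F z u n) ▸ BSKc_isClosed z _ n
    have hchain : ∀ (u : U) n, (BSchain F z u n).Nonempty ∧
        BSgsup F u (BSchain F z u n) = BSgsup F u univ := by
      intro u n
      induction n with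
      | zero => exact ⟨univ_nonempty, rfl⟩
      | succ n ih =>
        have h := BSpick_mem hF hz u n (hKcomp u n) ih.1
        exact ⟨h.1, h.2.trans ih.2⟩
    set ψ : ℕ → U → V := fun n u => z (BSidx F z u n) with hψ
    have hnested : ∀ (u : U) n, BSchain F z u (n+1) ⊆ BSchain F z u n := fun u n =>
      inter_subset_left
    have hball : ∀ (u : U) n, BSchain F z u (n+1) ⊆ closedBall (ψ n u) ((1/2 : ℝ)^n) :=
      fun u n => inter_subset_right
    have hint : ∀ u : U, ∃ v, v ∈ ⋂ n, BSchain F z u n := fun u =>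
      IsCompact.nonempty_iInter_of_sequence_nonempty_isCompact_isClosed
        (BSchain F z u) (hnested u) (fun n => (hchain u n).1) (hKcomp u 0) (hKclosed u)
    choose φ hφ using hint
    have hφmem : ∀ (u : U) n, φ u ∈ BSchain F z u n := fun u n => mem_iInter.1 (hφ u) n
    have hdist : ∀ (u : U) n, dist (ψ n u) (φ u) ≤ (1/2 : ℝ)^n := by
      intro u n
      have := hball u n (hφmem u (n+1))
      rw [mem_closedBall] at this
      rw [dist_comm]; exact this
    have hhalf : Tendsto (fun n : ℕ => ((1/2 : ℝ))^n) atTop (𝓝 0) :=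
      tendsto_pow_atTop_nhds_zero_of_lt_one (by norm_num) (by norm_num)
    have htend : ∀ u : U, Tendsto (fun n => ψ n u) atTop (𝓝 (φ u)) := by
      intro u
      rw [tendsto_iff_dist_tendsto_zero]
      exact squeeze_zero (fun n => dist_nonneg) (hdist u) hhalf
    have hψmeas : ∀ n, Measurable (ψ n) := fun n =>
      measurable_from_nat.comp (BS_meas_idx hF hbdd z n)
    have hφmeas : Measurable φ :=
      measurable_of_tendsto_metrizable hψmeas (tendsto_pi_nhds.2 htend)
    refine ⟨φ, hφmeas, fun u => ?_⟩
    rw [hsup_eq]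
    have hm : ∀ n, ∃ v ∈ BSchain F z u n, F (u, v) = BSgsup F u univ := by
      intro n
      obtain ⟨v, hv, heq, -⟩ := BS_attain hF u (hKcomp u n) (hchain u n).1
      exact ⟨v, hv, heq.trans (hchain u n).2⟩
    choose m hmmem hmeq using hm
    have hmdist : ∀ n, dist (m (n+1)) (φ u) ≤ (1/2 : ℝ)^n + (1/2 : ℝ)^n := by
      intro n
      refine (dist_triangle _ (ψ n u) _).trans (add_le_add ?_ (hdist u n))
      have := hball u n (hmmem (n+1))
      rwa [mem_closedBall] at this
    have hmtend : Tendsto (fun n => m (n+1)) atTop (𝓝 (φ u)) := by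
      rw [tendsto_iff_dist_tendsto_zero]
      refine squeeze_zero (fun n => dist_nonneg) hmdist ?_
      simpa using hhalf.add hhalf
    have hle : F (u, φ u) ≤ BSgsup F u univ := BS_le_gsup hbdd u (mem_univ _)
    rcases eq_or_lt_of_le hle with heq | hlt
    · exact heq
    · exfalso
      have hev : ∀ᶠ p in 𝓝 (u, φ u), F p < BSgsup F u univ := hF (u, φ u) _ hlt
      have hptend : Tendsto (fun n => ((u, m (n+1)) : U × V)) atTop (𝓝 (u, φ u)) :=
        tendsto_const_nhds.prodMk_nhds hmtend
      obtain ⟨n, hn⟩ := (hptend.eventually hev).exists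
      rw [hmeq (n+1)] at hn
      exact lt_irrefl _ hn
end

section
/- Let E, A be metric spaces, λ a transition kernel from E × A to E with sup_{x,a} λ(x,a,E) < ∞ which is Feller (i.e. (x,a) ↦ ∫_E φ(y) λ(x,a,dy) is continuous for each φ ∈ C_b(E)). Let ṽ : [0,T] × E → ℝ be bounded and lower semicontinuous. Then the map (t,x,a) ↦ ∫_E ṽ(t,y) λ(x,a,dy) is bounded and lower semicontinuous on [0,T] × E × A. -/
open MeasureTheory Filter Topology

section MY

variable {X : Type*} [MetricSpace X] [Nonempty X]

/-- Moreau–Yosida approximation. -/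
noncomputable def myApprox (v : X → ℝ) (n : ℕ) (p : X) : ℝ :=
  ⨅ q, (v q + n * dist p q)

variable {v : X → ℝ} {C : ℝ} (hbdd : ∀ p, |v p| ≤ C)

include hbdd

lemma myApprox_bddBelow (n : ℕ) (p : X) :
    BddBelow (Set.range fun q => v q + n * dist p q) := by
  refine ⟨-C, ?_⟩
  rintro _ ⟨q, rfl⟩
  dsimp only
  have h1 : -C ≤ v q := neg_le_of_abs_le (hbdd q)
  have h2 : (0:ℝ) ≤ n * dist p q := by positivity
  linarith

lemma myApprox_le (n : ℕ) (p : X) : myApprox v n p ≤ v p := by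
  have := ciInf_le (myApprox_bddBelow hbdd n p) p
  simpa [myApprox] using this

lemma neg_le_myApprox (n : ℕ) (p : X) : -C ≤ myApprox v n p := by
  refine le_ciInf fun q => ?_
  have h1 : -C ≤ v q := neg_le_of_abs_le (hbdd q)
  have h2 : (0:ℝ) ≤ n * dist p q := by positivity
  linarith

lemma abs_myApprox_le (n : ℕ) (p : X) : |myApprox v n p| ≤ C := by
  rw [abs_le]
  refine ⟨neg_le_myApprox hbdd n p, (myApprox_le hbdd n p).trans ?_⟩
  exact le_of_abs_le (hbdd p)

lemma myApprox_le_add (n : ℕ) (p p' : X) :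
    myApprox v n p ≤ myApprox v n p' + n * dist p p' := by
  rw [← sub_le_iff_le_add]
  refine le_ciInf fun q => ?_
  rw [sub_le_iff_le_add]
  calc myApprox v n p ≤ v q + n * dist p q := ciInf_le (myApprox_bddBelow hbdd n p) q
    _ ≤ v q + n * dist p' q + n * dist p p' := by
        have h := dist_triangle p p' q
        have hn : (0:ℝ) ≤ (n:ℝ) := Nat.cast_nonneg n
        nlinarith

lemma abs_myApprox_sub_le (n : ℕ) (p p' : X) :
    |myApprox v n p - myApprox v n p'| ≤ n * dist p p' := by
  rw [abs_sub_le_iff]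
  constructor
  · linarith [myApprox_le_add hbdd n p p']
  · rw [dist_comm]
    linarith [myApprox_le_add hbdd n p' p]

lemma myApprox_continuous (n : ℕ) : Continuous (myApprox v n) := by
  refine (LipschitzWith.of_dist_le_mul (K := n) fun p p' => ?_).continuous
  rw [Real.dist_eq]
  simpa using abs_myApprox_sub_le hbdd n p p'

lemma myApprox_monotone (p : X) : Monotone fun n => myApprox v n p := by
  intro n m hnm
  refine le_ciInf fun q => ?_
  refine (ciInf_le (myApprox_bddBelow hbdd n p) q).trans ?_
  have : (n:ℝ) * dist p q ≤ (m:ℝ) * dist p q :=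
    mul_le_mul_of_nonneg_right (by exact_mod_cast hnm) dist_nonneg
  linarith

lemma myApprox_tendsto (hlsc : LowerSemicontinuous v) (p : X) :
    Tendsto (fun n => myApprox v n p) atTop (𝓝 (v p)) := by
  refine tendsto_order.2 ⟨fun a ha => ?_, fun b hb => ?_⟩
  · -- eventually a < myApprox n p
    set a' := (a + v p) / 2 with ha'
    have haa' : a < a' := by simp only [ha']; linarith
    have ha'v : a' < v p := by simp only [ha']; linarith
    obtain ⟨δ, hδ, hball⟩ : ∃ δ > 0, ∀ q, dist q p < δ → a' < v q := by
      have := hlsc p a' ha'v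
      rw [Metric.eventually_nhds_iff] at this
      obtain ⟨δ, hδ, h⟩ := this
      exact ⟨δ, hδ, fun q hq => h hq⟩
    obtain ⟨N, hN⟩ := exists_nat_ge ((a' + C) / δ)
    refine eventually_atTop.2 ⟨N, fun n hn => ?_⟩
    have hNn : (a' + C) / δ ≤ (n:ℝ) := hN.trans (by exact_mod_cast hn)
    have hnδ : a' + C ≤ (n:ℝ) * δ := by
      rw [div_le_iff₀ hδ] at hNn; linarith
    have : a' ≤ myApprox v n p := by
      refine le_ciInf fun q => ?_
      by_cases hq : dist q p < δ
      · have h1 := (hball q hq).le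
        have h2 : (0:ℝ) ≤ n * dist p q := by positivity
        linarith
      · push_neg at hq
        have h1 : -C ≤ v q := neg_le_of_abs_le (hbdd q)
        have h2 : (n:ℝ) * δ ≤ n * dist p q := by
          rw [dist_comm]
          exact mul_le_mul_of_nonneg_left hq (Nat.cast_nonneg n)
        linarith
    linarith
  · exact Eventually.of_forall fun n => lt_of_le_of_lt (myApprox_le hbdd n p) hb

end MY

theorem stmt_8 {E A : Type*} [MetricSpace E] [MetricSpace A]
    [MeasurableSpace E] [BorelSpace E]
    (k : E → A → Measure E) (Λ : ℝ)
    (hmass : ∀ x a, k x a Set.univ ≤ ENNReal.ofReal Λ)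
    (hFeller : ∀ φ : E → ℝ, Continuous φ → (∃ M, ∀ y, |φ y| ≤ M) →
      Continuous fun p : E × A => ∫ y, φ y ∂ k p.1 p.2)
    (T : ℝ) (v : Set.Icc (0:ℝ) T × E → ℝ) (C : ℝ)
    (hlsc : LowerSemicontinuous v) (hbdd : ∀ p, |v p| ≤ C) :
    (LowerSemicontinuous fun p : Set.Icc (0:ℝ) T × E × A =>
      ∫ y, v (p.1, y) ∂ k p.2.1 p.2.2) ∧
    ∃ C' : ℝ, ∀ p : Set.Icc (0:ℝ) T × E × A,
      |∫ y, v (p.1, y) ∂ k p.2.1 p.2.2| ≤ C' := by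
  obtain hE | hne := isEmpty_or_nonempty (Set.Icc (0:ℝ) T × E × A)
  · exact ⟨fun p => (hE.false p).elim, 0, fun p => (hE.false p).elim⟩
  obtain ⟨⟨t0', x0', a0'⟩⟩ := hne
  have hC0 : 0 ≤ C := (abs_nonneg _).trans (hbdd (t0', x0'))
  haveI : Nonempty (Set.Icc (0:ℝ) T × E) := ⟨(t0', x0')⟩
  set Λ' := max Λ 0 with hΛ'
  have hΛ'0 : 0 ≤ Λ' := le_max_right _ _
  have hfin : ∀ x a, IsFiniteMeasure (k x a) := fun x a =>
    ⟨lt_of_le_of_lt (hmass x a) ENNReal.ofReal_lt_top⟩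
  have hmassR : ∀ x a, (k x a Set.univ).toReal ≤ Λ' := fun x a =>
    ENNReal.toReal_le_of_le_ofReal hΛ'0
      ((hmass x a).trans (ENNReal.ofReal_le_ofReal (le_max_left _ _)))
  set u := myApprox v with hu
  have hint_of : ∀ (x : E) (a : A) (φ : E → ℝ), AEStronglyMeasurable φ (k x a) →
      (∀ y, |φ y| ≤ C) → Integrable φ (k x a) := by
    intro x a φ hmeas hb
    haveI := hfin x a
    exact (integrable_const C).mono' hmeas
      (Eventually.of_forall fun y => by simpa [Real.norm_eq_abs] using hb y)
  have hvmeas : ∀ t : Set.Icc (0:ℝ) T, Measurable fun y : E => v (t, y) := by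
    intro t
    have : LowerSemicontinuous fun y : E => v (t, y) :=
      LowerSemicontinuous.comp hlsc (Continuous.prodMk_right t)
    exact this.measurable
  have hintv : ∀ (t : Set.Icc (0:ℝ) T) (x : E) (a : A),
      Integrable (fun y => v (t, y)) (k x a) := fun t x a =>
    hint_of x a _ (hvmeas t).aestronglyMeasurable (fun y => hbdd _)
  have hucont : ∀ (n : ℕ) (t : Set.Icc (0:ℝ) T), Continuous fun y : E => u n (t, y) :=
    fun n t => (myApprox_continuous hbdd n).comp (Continuous.prodMk_right t)
  have hintu : ∀ (n : ℕ) (t : Set.Icc (0:ℝ) T) (x : E) (a : A),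
      Integrable (fun y => u n (t, y)) (k x a) := fun n t x a =>
    hint_of x a _ ((hucont n t).aestronglyMeasurable) (fun y => abs_myApprox_le hbdd n _)
  set g : ℕ → Set.Icc (0:ℝ) T × E × A → ℝ :=
    fun n p => ∫ y, u n (p.1, y) ∂ k p.2.1 p.2.2 with hg
  have hgbdd : ∀ n p, |g n p| ≤ C * Λ' := by
    intro n ⟨t, x, a⟩
    haveI := hfin x a
    have h := norm_integral_le_of_norm_le_const (μ := k x a)
      (f := fun y => u n (t, y)) (C := C)
      (Eventually.of_forall fun y => by
        simpa [Real.norm_eq_abs] using abs_myApprox_le hbdd n (t, y))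
    rw [Real.norm_eq_abs] at h
    refine h.trans ?_
    exact mul_le_mul_of_nonneg_left (hmassR x a) hC0
  have hgcont : ∀ n, Continuous (g n) := by
    intro n
    rw [Metric.continuous_iff]
    rintro ⟨t0, x0, a0⟩ ε hε
    have hF := hFeller (fun y => u n (t0, y)) (hucont n t0)
      ⟨C, fun y => abs_myApprox_le hbdd n _⟩
    obtain ⟨δ1, hδ1, hF1⟩ := (Metric.continuous_iff.1 hF) (x0, a0) (ε/2) (by linarith)
    have hpos : (0:ℝ) < n * Λ' + 1 := by positivity
    set δ2 := ε / (2 * (n * Λ' + 1)) with hδ2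
    have hδ2pos : 0 < δ2 := by positivity
    refine ⟨min δ1 δ2, lt_min hδ1 hδ2pos, ?_⟩
    rintro ⟨t, x, a⟩ hdist
    haveI := hfin x a
    haveI := hfin x0 a0
    have hd1 : dist (x, a) (x0, a0) < δ1 := by
      refine lt_of_le_of_lt ?_ (hdist.trans_le (min_le_left _ _))
      rw [Prod.dist_eq]
      exact le_max_right _ _
    have hd2 : dist t t0 < δ2 := by
      refine lt_of_le_of_lt ?_ (hdist.trans_le (min_le_right _ _))
      rw [Prod.dist_eq]
      exact le_max_left _ _
    have h1 : |∫ y, (u n (t, y) - u n (t0, y)) ∂ k x a|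
        ≤ (n * dist t t0) * (k x a Set.univ).toReal := by
      have h := norm_integral_le_of_norm_le_const (μ := k x a)
        (f := fun y => u n (t, y) - u n (t0, y)) (C := n * dist t t0)
        (Eventually.of_forall fun y => by
          rw [Real.norm_eq_abs]
          refine (abs_myApprox_sub_le hbdd n (t, y) (t0, y)).trans ?_
          have hdeq : dist ((t, y) : Set.Icc (0:ℝ) T × E) (t0, y) = dist t t0 := by
            rw [Prod.dist_eq, dist_self]
            exact max_eq_left dist_nonneg
          rw [hdeq])
      rwa [Real.norm_eq_abs] at h
    have h2 : |(∫ y, u n (t0, y) ∂ k x a) - ∫ y, u n (t0, y) ∂ k x0 a0| < ε/2 := by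
      have := hF1 (x, a) hd1
      rwa [Real.dist_eq] at this
    have key : g n (t, x, a) - g n (t0, x0, a0) =
        (∫ y, (u n (t, y) - u n (t0, y)) ∂ k x a) +
        ((∫ y, u n (t0, y) ∂ k x a) - ∫ y, u n (t0, y) ∂ k x0 a0) := by
      rw [integral_sub (hintu n t x a) (hintu n t0 x a)]
      simp only [hg]
      ring
    rw [Real.dist_eq, key]
    have h1' : (n * dist t t0) * (k x a Set.univ).toReal ≤ ε/2 := by
      have ha := hmassR x a
      have hdn : (0:ℝ) ≤ (n:ℝ) := Nat.cast_nonneg n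
      have hdd : (0:ℝ) ≤ dist t t0 := dist_nonneg
      have htoReal : (0:ℝ) ≤ (k x a Set.univ).toReal := ENNReal.toReal_nonneg
      have hd2' : dist t t0 ≤ δ2 := hd2.le
      have hδ2eq : δ2 * (2 * (n * Λ' + 1)) = ε := by
        rw [hδ2]; field_simp
      nlinarith [mul_le_mul_of_nonneg_left ha hdn, hδ2pos.le]
    calc |(∫ y, (u n (t, y) - u n (t0, y)) ∂ k x a) +
        ((∫ y, u n (t0, y) ∂ k x a) - ∫ y, u n (t0, y) ∂ k x0 a0)|
        ≤ |∫ y, (u n (t, y) - u n (t0, y)) ∂ k x a| +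
          |(∫ y, u n (t0, y) ∂ k x a) - ∫ y, u n (t0, y) ∂ k x0 a0| := abs_add_le _ _
      _ < ε/2 + ε/2 := by
          have := h1.trans h1'
          linarith
      _ = ε := by ring
  have hmono : ∀ p, Monotone fun n => g n p := by
    rintro ⟨t, x, a⟩ m n hmn
    exact integral_mono (hintu m t x a) (hintu n t x a)
      (fun y => myApprox_monotone hbdd (t, y) hmn)
  have htend : ∀ p : Set.Icc (0:ℝ) T × E × A,
      Tendsto (fun n => g n p) atTop (𝓝 (∫ y, v (p.1, y) ∂ k p.2.1 p.2.2)) := by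
    rintro ⟨t, x, a⟩
    exact integral_tendsto_of_tendsto_of_monotone (fun n => hintu n t x a) (hintv t x a)
      (Eventually.of_forall fun y m n hmn => myApprox_monotone hbdd (t, y) hmn)
      (Eventually.of_forall fun y => myApprox_tendsto hbdd hlsc (t, y))
  have hbddabove : ∀ p, BddAbove (Set.range fun n => g n p) := by
    intro p
    exact ⟨C * Λ', by rintro _ ⟨n, rfl⟩; exact le_of_abs_le (hgbdd n p)⟩
  have hsup : ∀ p : Set.Icc (0:ℝ) T × E × A,
      (∫ y, v (p.1, y) ∂ k p.2.1 p.2.2) = ⨆ n, g n p := fun p =>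
    tendsto_nhds_unique (htend p) (tendsto_atTop_ciSup (hmono p) (hbddabove p))
  constructor
  · have : (fun p : Set.Icc (0:ℝ) T × E × A => ∫ y, v (p.1, y) ∂ k p.2.1 p.2.2)
        = fun p => ⨆ n, g n p := funext hsup
    rw [this]
    exact lowerSemicontinuous_ciSup hbddabove fun n => (hgcont n).lowerSemicontinuous
  · refine ⟨C * Λ', ?_⟩
    rintro ⟨t, x, a⟩
    haveI := hfin x a
    have h := norm_integral_le_of_norm_le_const (μ := k x a)
      (f := fun y => v (t, y)) (C := C)
      (Eventually.of_forall fun y => by simpa [Real.norm_eq_abs] using hbdd (t, y))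
    rw [Real.norm_eq_abs] at h
    exact h.trans (mul_le_mul_of_nonneg_left (hmassR x a) hC0)
end
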